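/- arXiv:1708.05290 — 2 statements merged into one kernel-verified Lean document; each statement's English description precedes it below -/
import Mathlib

section
/- Let G be a simple graph in which every maximal clique is finite with exactly N vertices. If λ : G → G is an edge-preserving map and K is a maximal clique of G, then λ(K) is contained in some maximal clique of G, and since λ is injective on K, λ(K) is itself a maximal clique of G. -/
/-- A vertex map is edge-preserving if it maps adjacent vertices to adjacent vertices. -/
def EdgePreserving {V : Type*} (G : SimpleGraph V) (f : V → V) : Prop :=
  ∀ u v : V, G.Adj u v → G.Adj (f u) (f v)

/-- A maximal clique: a clique contained in no strictly larger clique. -/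
def IsMaxClique {V : Type*} (G : SimpleGraph V) (K : Set V) : Prop :=
  G.IsClique K ∧ ∀ K' : Set V, G.IsClique K' → K ⊆ K' → K' = K

/-- Every clique is contained in a maximal clique (Zorn). -/
lemma exists_maxClique_supset {V : Type*} (G : SimpleGraph V) (C : Set V)
    (hC : G.IsClique C) : ∃ M : Set V, IsMaxClique G M ∧ C ⊆ M := by
  have hz : ∀ c ⊆ {s : Set V | G.IsClique s}, IsChain (· ⊆ ·) c → c.Nonempty →
      ∃ ub ∈ {s : Set V | G.IsClique s}, ∀ s ∈ c, s ⊆ ub := by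
    intro c hc hchain _
    refine ⟨⋃₀ c, ?_, fun s hs => Set.subset_sUnion_of_mem hs⟩
    intro x hx y hy hxy
    obtain ⟨s, hs, hxs⟩ := hx
    obtain ⟨t, ht, hyt⟩ := hy
    rcases hchain.total hs ht with h | h
    · exact hc ht (h hxs) hyt hxy
    · exact hc hs hxs (h hyt) hxy
  obtain ⟨M, hCM, hM⟩ := zorn_subset_nonempty {s : Set V | G.IsClique s} hz C hC
  exact ⟨M, ⟨hM.1, fun K' hK' hMK' => (hM.2 hK' hMK').antisymm hMK'⟩, hCM⟩

/-- If every maximal clique of `G` is finite with exactly `N` vertices and `λ` is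
edge-preserving, then the image of a maximal clique is contained in a maximal clique,
and is itself a maximal clique. -/
theorem edgePreserving_image_maxClique {V : Type*} (G : SimpleGraph V) (N : ℕ)
    (hN : ∀ K : Set V, IsMaxClique G K → K.Finite ∧ K.ncard = N)
    (l : V → V) (hl : EdgePreserving G l) (K : Set V) (hK : IsMaxClique G K) :
    (∃ M : Set V, IsMaxClique G M ∧ l '' K ⊆ M) ∧ IsMaxClique G (l '' K) := by
  have hclique : G.IsClique (l '' K) := by
    rintro _ ⟨u, hu, rfl⟩ _ ⟨v, hv, rfl⟩ hne
    exact hl u v (hK.1 hu hv (fun h => hne (by rw [h])))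
  obtain ⟨M, hM, hsub⟩ := exists_maxClique_supset G _ hclique
  have hinj : Set.InjOn l K := by
    intro u hu v hv huv
    by_contra hne
    exact ((hl u v (hK.1 hu hv hne)).ne) huv
  obtain ⟨hKfin, hKcard⟩ := hN K hK
  obtain ⟨hMfin, hMcard⟩ := hN M hM
  have himg : (l '' K).ncard = N := by
    rw [Set.ncard_image_of_injOn hinj, hKcard]
  have : l '' K = M :=
    Set.eq_of_subset_of_ncard_le hsub (by rw [himg, hMcard]) hMfin
  exact ⟨⟨M, hM, hsub⟩, this ▸ hM⟩
end

section
/- Let S be a group acting on a set V, let λ : V → V be a map, let h ∈ S, and let G be a generating set of a group Γ ≤ S acting on V. Suppose X₁ ⊆ V satisfies: λ(x) = h·x for all x ∈ X₁; and for each f ∈ G there is a subset L_f ⊆ X₁ with λ(x) = h·x for all x ∈ L_f ∪ f·L_f, such that the pointwise stabilizer of L_f in S is trivial and the pointwise stabilizer of f·L_f in S is trivial. Further suppose: for each k ≥ 2, defining X_k = X_{k−1} ∪ ⋃_{f∈G} (f·X_{k−1} ∪ f⁻¹·X_{k−1}), for every f ∈ G and k there exist elements h_f, h'_f ∈ S with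 λ(x) = h_f·x for all x ∈ f·X_{k−1} and λ(x) = h'_f·x for all x ∈ f⁻¹·X_{k−1}. Then λ(x) = h·x for all x ∈ ⋃_{k≥1} X_k. -/
open Pointwise

/-- The inductive propagation argument of Theorem 2.16: if `λ` agrees with `h` on `X₁`,
agreement propagates via sets `L_f` with trivial pointwise stabilizers, and on each
translate `f • X_{k-1}`, `f⁻¹ • X_{k-1}` the map `λ` is induced by some group element,
then `λ` agrees with `h` on all of `⋃_{k ≥ 1} X_k`. -/
theorem agreement_propagates {S V : Type*} [Group S] [MulAction S V]
    (Γ : Subgroup S) (G : Set S) (hGΓ : Subgroup.closure G = Γ)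
    (l : V → V) (h : S)
    (X : ℕ → Set V)
    (hbase : ∀ x ∈ X 1, l x = h • x)
    (hrec : ∀ k : ℕ, 2 ≤ k →
      X k = X (k - 1) ∪ ⋃ f ∈ G, ((f • X (k - 1)) ∪ (f⁻¹ • X (k - 1))))
    (hL : ∀ f ∈ G, ∃ L : Set V, L ⊆ X 1 ∧
      (∀ x ∈ L ∪ f • L, l x = h • x) ∧
      (∀ s : S, (∀ a ∈ L, s • a = a) → s = 1) ∧
      (∀ s : S, (∀ a ∈ f • L, s • a = a) → s = 1))
    (hstep : ∀ f ∈ G, ∀ k : ℕ, 1 ≤ k →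
      (∃ hf : S, ∀ x ∈ f • X k, l x = hf • x) ∧
      (∃ hf' : S, ∀ x ∈ f⁻¹ • X k, l x = hf' • x)) :
    ∀ x ∈ ⋃ k : ℕ, X (k + 1), l x = h • x := by
  have mono : ∀ k : ℕ, 1 ≤ k → X k ⊆ X (k + 1) := by
    intro k hk
    rw [hrec (k + 1) (by omega)]
    simp only [Nat.add_sub_cancel]
    exact Set.subset_union_left
  have hX1 : ∀ k : ℕ, X 1 ⊆ X (k + 1) := by
    intro k
    induction k with
    | zero => exact subset_rfl
    | succ n ih => exact ih.trans (mono (n + 1) (by omega))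
  have hX2 : ∀ k : ℕ, X 2 ⊆ X (k + 2) := by
    intro k
    induction k with
    | zero => exact subset_rfl
    | succ n ih => exact ih.trans (mono (n + 2) (by omega))
  have main : ∀ k : ℕ, ∀ x ∈ X (k + 1), l x = h • x := by
    intro k
    induction k with
    | zero => exact hbase
    | succ n ih =>
      intro x hx
      rw [hrec (n + 2) (by omega)] at hx
      rcases hx with hx | hx
      · exact ih x hx
      · simp only [Set.mem_iUnion] at hx
        obtain ⟨f, hf, hx⟩ := hx
        obtain ⟨L, hL1, hLh, hLtriv, hfLtriv⟩ := hL f hf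
        obtain ⟨⟨hf1, hhf1⟩, ⟨hf2, hhf2⟩⟩ := hstep f hf (n + 2) (by omega)
        have hfLX : f • L ⊆ X (n + 2) := by
          refine (fun a ha => hX2 n ?_)
          rw [hrec 2 (by norm_num)]
          right
          simp only [Set.mem_iUnion]
          exact ⟨f, hf, Or.inl (Set.smul_set_mono hL1 ha)⟩
        rcases hx with hx | hx
        · have heq : hf1 = h := by
            refine inv_mul_eq_one.mp (hfLtriv _ (fun a ha => ?_))
            have haX : a ∈ f • X (n + 2) :=
              Set.smul_set_mono (hL1.trans (hX1 (n + 1))) ha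
            have e1 : l a = hf1 • a := hhf1 a haX
            have e2 : l a = h • a := hLh a (Or.inr ha)
            rw [mul_smul, ← e2, e1, inv_smul_smul]
          have hx' : x ∈ f • X (n + 2) :=
            Set.smul_set_mono (mono (n + 1) (by omega)) hx
          rw [heq] at hhf1
          exact hhf1 x hx'
        · have heq : hf2 = h := by
            refine inv_mul_eq_one.mp (hLtriv _ (fun a ha => ?_))
            have haX : a ∈ f⁻¹ • X (n + 2) := by
              rw [Set.mem_inv_smul_set_iff]
              exact hfLX (Set.smul_mem_smul_set ha)
            have e1 : l a = hf2 • a := hhf2 a haX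
            have e2 : l a = h • a := hLh a (Or.inl ha)
            rw [mul_smul, ← e2, e1, inv_smul_smul]
          have hx' : x ∈ f⁻¹ • X (n + 2) :=
            Set.smul_set_mono (mono (n + 1) (by omega)) hx
          rw [heq] at hhf2
          exact hhf2 x hx'
  intro x hx
  simp only [Set.mem_iUnion] at hx
  obtain ⟨k, hk⟩ := hx
  exact main k x hk
end
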